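/- (Metabelian BCH, following Gerritzen) In the free metabelian nilpotent-of-class-c Lie algebra L_{2,c} on generators x, y over a field of characteristic 0, the unique z with exp(ad z) = exp(ad x) ∘ exp(ad y) has the form z = x + y + [x,y]·c(ad x, ad y) for some power series c(t,u) ∈ ℚ[[t,u]] (truncated to degree ≤ c−2), whose low-order terms are c(t,u) = 1/2 − t/12 + u/12 − tu/24 + ⋯; in particular, modulo terms of total degree ≥ 4, z = x + y + [x,y]/2 − [x,y,x]/12 + [x,y,y]/12. -/
import Mathlib


/-- The right adjoint action `adr x : u ↦ ⁅u, x⁆`. -/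
noncomputable def adr (K : Type*) (L : Type*) [Field K] [LieRing L] [LieAlgebra K L]
    (x : L) : Module.End K L := -(LieAlgebra.ad K L x)

/-- The inner automorphism `exp(ad v) = ∑_{k=0}^{c-1} (ad v)^k/k!` for class `c = 4`. -/
noncomputable def expAd4 (K : Type*) (L : Type*) [Field K] [LieRing L] [LieAlgebra K L]
    (v : L) : L → L :=
  fun w => ∑ k ∈ Finset.range 4, (k.factorial : K)⁻¹ • (((adr K L v) ^ k) w)

section Aux

variable {K : Type*} {L : Type*} [Field K] [LieRing L] [LieAlgebra K L]

lemma adr_apply (v w : L) : adr K L v w = ⁅w, v⁆ := by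
  rw [adr]
  simp only [LinearMap.neg_apply, LieAlgebra.ad_apply]
  rw [← lie_skew, neg_neg]

lemma adr_add (u v : L) : adr K L (u + v) = adr K L u + adr K L v := by
  ext w; simp [adr_apply]

lemma adr_sub (u v : L) : adr K L (u - v) = adr K L u - adr K L v := by
  ext w; simp [adr_apply]

lemma adr_smul (s : K) (v : L) : adr K L (s • v) = s • adr K L v := by
  ext w; simp [adr_apply]

lemma adr_lie (u v : L) :
    adr K L ⁅u, v⁆ = adr K L v * adr K L u - adr K L u * adr K L v := by
  ext w
  simp only [LinearMap.sub_apply, Module.End.mul_apply, adr_apply]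
  rw [leibniz_lie w u v, ← lie_skew ⁅w, v⁆ u]
  abel

lemma mem_lcs_succ {n : ℕ} {m : L} (hm : m ∈ LieModule.lowerCentralSeries K L L n)
    (a : L) : ⁅m, a⁆ ∈ LieModule.lowerCentralSeries K L L (n + 1) := by
  rw [← lie_skew, LieModule.lowerCentralSeries_succ]
  exact neg_mem (LieSubmodule.lie_mem_lie (LieSubmodule.mem_top _) hm)

lemma nil4 (hnil : LieModule.lowerCentralSeries K L L 4 = ⊥) (a b c d u : L) :
    adr K L a (adr K L b (adr K L c (adr K L d u))) = 0 := by
  simp only [adr_apply]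
  have h0 : u ∈ LieModule.lowerCentralSeries K L L 0 := LieSubmodule.mem_top _
  have h4 := mem_lcs_succ (mem_lcs_succ (mem_lcs_succ (mem_lcs_succ h0 d) c) b) a
  rw [hnil] at h4
  simpa using h4

end Aux

/-- Metabelian Baker–Campbell–Hausdorff formula (after Gerritzen) in a metabelian Lie
algebra that is nilpotent of class `4` (as is the free metabelian algebra `L_{2,4}` on
`x, y`): `exp(ad x) ∘ exp(ad y) = exp(ad z)` for
`z = x + y + [x,y]/2 − [x,y,x]/12 + [x,y,y]/12`,
i.e. `z` agrees with the BCH series `x + y + [x,y]·c(ad x, ad y)`,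
`c(t,u) = 1/2 − t/12 + u/12 − tu/24 + ⋯`, modulo terms of total degree ≥ 4
(which act trivially). Here the automorphisms act on the right, so the composition
`exp(ad x) ∘ exp(ad y)` sends `w` to `(w·exp(ad x))·exp(ad y)`. -/
theorem metabelian_BCH_class_four
    (K : Type*) (L : Type*) [Field K] [CharZero K] [LieRing L] [LieAlgebra K L]
    (hmet : ∀ a b c d : L, ⁅⁅a, b⁆, ⁅c, d⁆⁆ = 0)
    (hnil : LieModule.lowerCentralSeries K L L 4 = ⊥)
    (x y : L) :
    ∀ w : L,
      expAd4 K L y (expAd4 K L x w) =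
        expAd4 K L
          (x + y + (2 : K)⁻¹ • ⁅x, y⁆ - (12 : K)⁻¹ • ⁅⁅x, y⁆, x⁆ +
            (12 : K)⁻¹ • ⁅⁅x, y⁆, y⁆) w := by
  intro w
  have hn := nil4 hnil (K := K) (L := L)
  simp only [expAd4, Finset.sum_range_succ, Finset.sum_range_zero, pow_succ, pow_zero,
    Nat.factorial, adr_add, adr_sub, adr_smul, adr_lie,
    Module.End.one_apply, Module.End.mul_apply, LinearMap.add_apply, LinearMap.sub_apply,
    LinearMap.smul_apply, map_add, map_sub, map_smul, map_zero, zero_add,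
    hn, smul_zero, add_zero, sub_zero, neg_zero]
  match_scalars <;> field_simp <;> ring
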